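/- Let σ⁰ : ℝ → ℝ be differentiable with |dσ⁰/dt| ≤ L₁ and T-periodic, σ_* > T L₁ > 0, σ₁ ∈ ℝ, and τ⁰ ∈ (0,T) with σ⁰(τ⁰) = σ₁ + σ_* τ⁰/T. Suppose σ(nT) < σ₁ (so the pulse duration is τₙ = 0) and set vₙ = -τ⁰/T and σ_d = σ - σ⁰. Then σ_d(nT) < vₙ(σ_* - (dσ⁰/dt)(t_s)) < 0 for some t_s ∈ [0, τ⁰], and consequently 0 ≤ vₙ/σ_d(nT) ≤ 1/(σ_* - T L₁). -/

import Mathlib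

/-- Case (ii) of Lemma 2: if `σ(nT) < σ₁` (zero pulse width, `vₙ = -τ⁰/T`), then
`σ_d(nT) < vₙ(σ_* - T·σ⁰'(t_s)) < 0` for some `t_s ∈ [0,τ⁰]`, and consequently
`0 ≤ vₙ/σ_d(nT) ≤ 1/(σ_* - TL₁)`. -/
theorem stmt_15 (T L1 σs σ1 τ0 : ℝ) (n : ℕ)
    (σ0 σ : ℝ → ℝ)
    (hT : 0 < T) (hL1 : 0 ≤ L1) (hσs : T * L1 < σs)
    (hdiff : Differentiable ℝ σ0)
    (hder : ∀ t, |deriv σ0 t| ≤ L1)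
    (hper : ∀ t, σ0 (t + T) = σ0 t)
    (hτ0 : τ0 ∈ Set.Ioo 0 T)
    (heq0 : σ0 τ0 = σ1 + σs * τ0 / T)
    (hlt : σ (n * T) < σ1)
    (σd : ℝ → ℝ) (hσd : ∀ t, σd t = σ t - σ0 t)
    (vn : ℝ) (hvn : vn = -τ0 / T) :
    (∃ ts ∈ Set.Icc 0 τ0,
        σd (n * T) < vn * (σs - T * deriv σ0 ts) ∧ vn * (σs - T * deriv σ0 ts) < 0)
      ∧ 0 ≤ vn / σd (n * T) ∧ vn / σd (n * T) ≤ 1 / (σs - T * L1) := by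
  obtain ⟨hτ0pos, hτ0T⟩ := hτ0
  -- periodicity: σ0 (n*T) = σ0 0
  have hperiod : σ0 (n * T) = σ0 0 := by
    clear hlt
    induction n with
    | zero => norm_num
    | succ k ih =>
      have h : ((k : ℝ) + 1) * T = k * T + T := by ring
      push_cast
      rw [h, hper, ih]
  -- MVT on [0, τ0]
  obtain ⟨ts, hts, hts'⟩ := exists_deriv_eq_slope σ0 hτ0pos
    (hdiff.continuous.continuousOn) (fun x _ => (hdiff x).differentiableWithinAt)
  have htsIcc : ts ∈ Set.Icc 0 τ0 := ⟨le_of_lt hts.1, le_of_lt hts.2⟩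
  have hslope : σ0 τ0 - σ0 0 = deriv σ0 ts * τ0 := by
    rw [hts']
    field_simp; ring
  have hb := hder ts
  have hb1 : deriv σ0 ts ≤ L1 := (abs_le.mp hb).2
  have hb2 : -L1 ≤ deriv σ0 ts := (abs_le.mp hb).1
  have hcpos : 0 < σs - T * deriv σ0 ts := by nlinarith
  have hvneg : vn < 0 := by
    rw [hvn]; exact div_neg_of_neg_of_pos (by linarith) hT
  have hσdval : σd (n * T) = σ (n * T) - σ0 τ0 + deriv σ0 ts * τ0 := by
    rw [hσd, hperiod]; linarith
  have key : σd (n * T) < vn * (σs - T * deriv σ0 ts) := by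
    rw [hσdval, heq0, hvn]
    have : -τ0 / T * (σs - T * deriv σ0 ts)
        = -(σs * τ0 / T) + deriv σ0 ts * τ0 := by
      field_simp; ring
    rw [this]
    linarith
  have key2 : vn * (σs - T * deriv σ0 ts) < 0 :=
    mul_neg_of_neg_of_pos hvneg hcpos
  refine ⟨⟨ts, htsIcc, key, key2⟩, ?_, ?_⟩
  · have hσdneg : σd (n * T) < 0 := lt_trans key key2
    exact le_of_lt (div_pos_of_neg_of_neg hvneg hσdneg)
  · have hσdneg : σd (n * T) < 0 := lt_trans key key2
    have h1 : vn / σd (n * T) ≤ 1 / (σs - T * deriv σ0 ts) := by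
      have hne : σd (n * T) ≠ 0 := ne_of_lt hσdneg
      have hcne : σs - T * deriv σ0 ts ≠ 0 := ne_of_gt hcpos
      have e : 1 / (σs - T * deriv σ0 ts) - vn / σd (n * T)
          = (σd (n * T) - vn * (σs - T * deriv σ0 ts))
            / ((σs - T * deriv σ0 ts) * σd (n * T)) := by
        rw [div_sub_div _ _ hcne hne]; ring
      have hnum : σd (n * T) - vn * (σs - T * deriv σ0 ts) < 0 := by linarith
      have hden : (σs - T * deriv σ0 ts) * σd (n * T) < 0 :=
        mul_neg_of_pos_of_neg hcpos hσdneg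
      have : 0 ≤ (σd (n * T) - vn * (σs - T * deriv σ0 ts))
            / ((σs - T * deriv σ0 ts) * σd (n * T)) :=
        le_of_lt (div_pos_of_neg_of_neg hnum hden)
      linarith
    have h2 : (1:ℝ) / (σs - T * deriv σ0 ts) ≤ 1 / (σs - T * L1) := by
      apply one_div_le_one_div_of_le (by linarith)
      nlinarith
    linarith
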